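/- arXiv:0811.2754 — 2 statements merged into one kernel-verified Lean document; each statement's English description precedes it below -/
import Mathlib

section
/- Let O be a set of subsets of U and let X ⊆ U be nonempty and downward ⪯_s-closed. Then X is a union of intersections of members of O relativized to U: there is a family (O_i)_{i∈I} of subsets of O with X = (⋃_i ⋂ O_i) ∩ U (with the convention ⋂∅ = U). -/
/-- The set of obligations satisfied by x. -/
def Obls {α : Type*} (O : Set (Set α)) (x : α) : Set (Set α) := {A ∈ O | x ∈ A}

/-- a nonempty downward ⪯_s-closed set is a union of intersections
of obligations (relativized to the universe; ⋂∅ = univ). -/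
theorem stmt18 {α : Type*} (O : Set (Set α)) (hO : O.Finite) (X : Set α)
    (hne : X.Nonempty)
    (hcl : ∀ x ∈ X, ∀ y : α, Obls O x ⊆ Obls O y → y ∈ X) :
    ∃ (ι : Type) (f : ι → Set (Set α)), (∀ i, f i ⊆ O) ∧
      X = (⋃ i, ⋂₀ f i) ∩ Set.univ := by
  obtain ⟨x0, hx0⟩ := hne
  have hTfin : (Obls O '' X).Finite := by
    apply hO.finite_subsets.subset
    rintro _ ⟨x, _, rfl⟩
    exact fun A hA => hA.1
  set L := hTfin.toFinset.toList with hL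
  have hmemL : ∀ s, s ∈ L ↔ s ∈ Obls O '' X := by
    intro s
    rw [hL, Finset.mem_toList, Set.Finite.mem_toFinset]
  -- every value of f is Obls O x for some x ∈ X
  have hval : ∀ n, ∃ x ∈ X, L.getD n (Obls O x0) = Obls O x := by
    intro n
    by_cases h : n < L.length
    · have : L[n] ∈ L := List.getElem_mem h
      rw [hmemL] at this
      obtain ⟨x, hx, hxe⟩ := this
      exact ⟨x, hx, by simp [List.getD, List.getElem?_eq_getElem h]; exact hxe.symm⟩
    · refine ⟨x0, hx0, ?_⟩
      simp [List.getD, List.getElem?_eq_none (le_of_not_gt h)]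
  have hsub : ∀ x ∈ X, ∀ y, y ∈ ⋂₀ Obls O x → y ∈ X := by
    intro x hx y hy
    exact hcl x hx y (fun A hA => ⟨hA.1, hy A hA⟩)
  refine ⟨ℕ, fun n => L.getD n (Obls O x0), ?_, ?_⟩
  · intro n
    obtain ⟨x, _, hxe⟩ := hval n
    show L.getD n (Obls O x0) ⊆ O
    rw [hxe]
    exact fun A hA => hA.1
  · rw [Set.inter_univ]
    ext y
    constructor
    · intro hy
      have : Obls O y ∈ L := (hmemL _).2 ⟨y, hy, rfl⟩
      obtain ⟨n, hn, hget⟩ := List.getElem_of_mem this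
      refine Set.mem_iUnion.2 ⟨n, ?_⟩
      show y ∈ ⋂₀ L.getD n (Obls O x0)
      have : L.getD n (Obls O x0) = Obls O y := by
        simp [List.getD, List.getElem?_eq_getElem hn, hget]
      rw [this]
      exact fun A hA => hA.2
    · intro hy
      obtain ⟨n, hn⟩ := Set.mem_iUnion.1 hy
      obtain ⟨x, hx, hxe⟩ := hval n
      have hn' : y ∈ ⋂₀ Obls O x := by
        rw [← hxe]; exact hn
      exact hsub x hx y hn'
end

section
/- Assume the system O of obligations over U is independent: for every function δ : O → {0,1} there exists m ∈ U with m ∈ O' iff δ(O')=1 for all O' ∈ O. If X ⊆ U is nonempty and downward ⪯_s-closed, then X ≺_{l,s} (U \ X): for x ∈ X, every closest element y of U\X satisfies x ≺_s y, and for y ∈ U\X, every closest element x of X satisfies x ≺_s y. -/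
/-- Set Hamming distance generated by O. -/
def dS {α : Type*} (O : Set (Set α)) (x y : α) : Set (Set α) :=
  symmDiff (Obls O x) (Obls O y)

/-- x ∥ Y: the elements of Y closest to x (no other element of Y is at
smaller-or-equal set distance). -/
def closestS {α : Type*} (O : Set (Set α)) (x : α) (Y : Set α) : Set α :=
  {y ∈ Y | ¬ ∃ y' ∈ Y, y' ≠ y ∧ dS O x y' ⊆ dS O x y}

/-- X ≺_{l,s} Y: X is locally better than Y. -/
def LocBetterS {α : Type*} (O : Set (Set α)) (X Y : Set α) : Prop :=
  (∀ x ∈ X, ∀ y ∈ closestS O x Y, Obls O y ⊂ Obls O x) ∧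
  (∀ y ∈ Y, ∀ x ∈ closestS O y X, Obls O y ⊂ Obls O x)

lemma exists_obls {α : Type*} (O : Set (Set α))
    (hind : ∀ δ : Set α → Bool, ∃ m : α, ∀ A ∈ O, (m ∈ A ↔ δ A = true))
    (S : Set (Set α)) (hS : S ⊆ O) : ∃ z : α, Obls O z = S := by
  classical
  obtain ⟨m, hm⟩ := hind (fun A => decide (A ∈ S))
  refine ⟨m, ?_⟩
  ext A
  constructor
  · rintro ⟨hAO, hmA⟩
    have := (hm A hAO).1 hmA
    simpa using this
  · intro hAS
    exact ⟨hS hAS, (hm A (hS hAS)).2 (by simpa)⟩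

/-- if the system O is independent, then any nonempty downward
⪯_s-closed X is locally better than its complement. -/
theorem stmt19 {α : Type*} (O : Set (Set α)) (hO : O.Finite)
    (hind : ∀ δ : Set α → Bool, ∃ m : α, ∀ A ∈ O, (m ∈ A ↔ δ A = true))
    (X : Set α) (hne : X.Nonempty)
    (hcl : ∀ x ∈ X, ∀ y : α, Obls O x ⊆ Obls O y → y ∈ X) :
    LocBetterS O X Xᶜ := by
  classical
  constructor
  · intro x hx y hy
    obtain ⟨hyC, hclosest⟩ := hy
    obtain ⟨z, hz⟩ := exists_obls O hind (Obls O x ∩ Obls O y)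
      (fun A hA => hA.1.1)
    by_cases hzX : z ∈ X
    · exact absurd (hcl z hzX y (hz ▸ Set.inter_subset_right)) hyC
    · by_cases hzy : z = y
      · rw [hzy] at hz
        have hsub : Obls O y ⊆ Obls O x := by
          rw [hz]; exact Set.inter_subset_left
        refine ⟨hsub, fun h => hyC (hcl x hx y h)⟩
      · exact absurd ⟨z, hzX, hzy, by
          rw [dS, dS, hz]
          intro A hA
          rw [Set.mem_symmDiff] at hA ⊢
          simp only [Set.mem_inter_iff] at hA
          tauto⟩ hclosest
  · intro y hyC x hx
    obtain ⟨hxX, hclosest⟩ := hx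
    obtain ⟨z, hz⟩ := exists_obls O hind (Obls O x ∪ Obls O y)
      (by rintro A (hA | hA) <;> exact hA.1)
    have hzX : z ∈ X := hcl x hxX z (hz ▸ Set.subset_union_left)
    by_cases hzx : z = x
    · rw [hzx] at hz
      have hsub : Obls O y ⊆ Obls O x := by
        conv_rhs => rw [hz]
        exact Set.subset_union_right
      refine ⟨hsub, fun h => hyC (hcl x hxX y h)⟩
    · exact absurd ⟨z, hzX, hzx, by
        rw [dS, dS, hz]
        intro A hA
        rw [Set.mem_symmDiff] at hA ⊢
        simp only [Set.mem_union] at hA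
        tauto⟩ hclosest
end
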